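/- arXiv:2204.04732 — 4 statements merged into one kernel-verified Lean document; each statement's English description precedes it below -/
import Mathlib

section
/- Let f, φ : ℂ → ℂ, let z ∈ ℂ, and let μ ∈ ℂ. Assume f is real-differentiable at z, φ is real-differentiable at f(z), and ∂̄φ(f(z)) = μ·∂φ(f(z)). Then (∂f(z) + μ·conj(∂̄f(z)))·∂̄(φ∘f)(z) = (∂̄f(z) + μ·conj(∂f(z)))·∂(φ∘f)(z). In particular, if ∂f(z) + μ·conj(∂̄f(z)) ≠ 0, then ∂̄(φ∘f)(z) = ν·∂(φ∘f)(z) where ν = (∂̄f(z) + μ·conj(∂f(z)))/(∂f(z) + μ·conj(∂̄f(z))). -/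
/-- The Wirtinger derivative `∂h(z) = (1/2)(Dh(z)(1) - i·Dh(z)(i))` of `h : ℂ → ℂ`,
where `Dh(z)` is the real Fréchet derivative. -/
noncomputable def wirtingerD (h : ℂ → ℂ) (z : ℂ) : ℂ :=
  (1 / 2) * (fderiv ℝ h z 1 - Complex.I * fderiv ℝ h z Complex.I)

/-- The conjugate Wirtinger derivative `∂̄h(z) = (1/2)(Dh(z)(1) + i·Dh(z)(i))`. -/
noncomputable def wirtingerDBar (h : ℂ → ℂ) (z : ℂ) : ℂ :=
  (1 / 2) * (fderiv ℝ h z 1 + Complex.I * fderiv ℝ h z Complex.I)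

private lemma lin_apply (L : ℂ →L[ℝ] ℂ) (w : ℂ) :
    L w = (1/2) * (L 1 - Complex.I * L Complex.I) * w
        + (1/2) * (L 1 + Complex.I * L Complex.I) * (starRingEnd ℂ w) := by
  have hw : w = w.re • (1:ℂ) + w.im • Complex.I := by
    simp only [Complex.real_smul, mul_one]
    exact (Complex.re_add_im w).symm
  have hc : (starRingEnd ℂ) w = (w.re : ℂ) - (w.im : ℂ) * Complex.I := by
    simp [Complex.ext_iff]
  conv_lhs => rw [hw]
  rw [map_add, map_smul, map_smul, hc]
  nth_rewrite 3 [hw]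
  simp only [Complex.real_smul]
  linear_combination ((w.im : ℂ) * L Complex.I) * Complex.I_sq

/-- The classical pullback formula for Beltrami coefficients: if `∂̄φ(f z) = μ·∂φ(f z)`,
then `(∂f + μ·conj ∂̄f)·∂̄(φ∘f) = (∂̄f + μ·conj ∂f)·∂(φ∘f)` at `z`; in particular,
when `∂f(z) + μ·conj(∂̄f(z)) ≠ 0`, the composite `φ∘f` is isothermal for the
pulled-back coefficient `ν = (∂̄f + μ·conj ∂f)/(∂f + μ·conj ∂̄f)`. -/
theorem beltrami_pullback (f φ : ℂ → ℂ) (z μ : ℂ)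
    (hf : DifferentiableAt ℝ f z) (hφ : DifferentiableAt ℝ φ (f z))
    (hiso : wirtingerDBar φ (f z) = μ * wirtingerD φ (f z)) :
    (wirtingerD f z + μ * (starRingEnd ℂ) (wirtingerDBar f z)) * wirtingerDBar (φ ∘ f) z =
      (wirtingerDBar f z + μ * (starRingEnd ℂ) (wirtingerD f z)) * wirtingerD (φ ∘ f) z ∧
    (wirtingerD f z + μ * (starRingEnd ℂ) (wirtingerDBar f z) ≠ 0 →
      wirtingerDBar (φ ∘ f) z =
        (wirtingerDBar f z + μ * (starRingEnd ℂ) (wirtingerD f z)) /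
          (wirtingerD f z + μ * (starRingEnd ℂ) (wirtingerDBar f z)) *
          wirtingerD (φ ∘ f) z) := by
  have hcomp : fderiv ℝ (φ ∘ f) z = (fderiv ℝ φ (f z)).comp (fderiv ℝ f z) :=
    fderiv_comp z hφ hf
  set L := fderiv ℝ φ (f z)
  set M := fderiv ℝ f z
  have happ : ∀ w, fderiv ℝ (φ ∘ f) z w = L (M w) := by
    intro w; rw [hcomp]; rfl
  set A := wirtingerD φ (f z) with hA
  set B := wirtingerDBar φ (f z) with hB
  set a := wirtingerD f z with ha
  set b := wirtingerDBar f z with hb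
  have hL : ∀ w, L w = A * w + B * (starRingEnd ℂ w) := fun w => lin_apply L w
  have hM1 : M 1 = a + b := by
    rw [lin_apply M 1, ha, hb, wirtingerD, wirtingerDBar]
    simp only [map_one, mul_one]
    rfl
  have hMI : M Complex.I = a * Complex.I + b * (starRingEnd ℂ Complex.I) := by
    rw [lin_apply M Complex.I, ha, hb, wirtingerD, wirtingerDBar]
  have hD : wirtingerD (φ ∘ f) z = A * a + B * (starRingEnd ℂ) b := by
    rw [wirtingerD, happ, happ, hM1, hMI, hL, hL]
    simp only [map_add, map_mul, map_neg, map_one, Complex.conj_I, Complex.conj_conj,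
      mul_neg, neg_mul, neg_neg]
    linear_combination ((1/2) * (-(A*a) + A*b + B * (starRingEnd ℂ a)
      - B * (starRingEnd ℂ b))) * Complex.I_sq
  have hDbar : wirtingerDBar (φ ∘ f) z = A * b + B * (starRingEnd ℂ) a := by
    rw [wirtingerDBar, happ, happ, hM1, hMI, hL, hL]
    simp only [map_add, map_mul, map_neg, map_one, Complex.conj_I, Complex.conj_conj,
      mul_neg, neg_mul, neg_neg]
    linear_combination ((1/2) * (A*a - A*b - B * (starRingEnd ℂ a)
      + B * (starRingEnd ℂ b))) * Complex.I_sq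
  have hBmu : B = μ * A := hiso
  have main : (a + μ * (starRingEnd ℂ) b) * wirtingerDBar (φ ∘ f) z =
      (b + μ * (starRingEnd ℂ) a) * wirtingerD (φ ∘ f) z := by
    rw [hD, hDbar, hBmu]; ring
  refine ⟨main, fun hne => ?_⟩
  field_simp
  linear_combination main
end

section
/- Let U ⊆ ℂ be open, let w : ℂ → ℂ be twice continuously real-differentiable on U (ContDiffOn ℝ 2), let φ, μ : ℂ → ℂ be real-differentiable on U, and suppose ∂̄w(z) = −μ(z)·∂w(z) for all z ∈ U. Then for every natural number n and every z ∈ U, ∂̄(ζ ↦ φ(ζ)·(∂w(ζ))ⁿ)(z) + μ(z)·∂(ζ ↦ φ(ζ)·(∂w(ζ))ⁿ)(z) = (∂̄φ(z) + μ(z)·∂φ(z) − n·φ(z)·∂μ(z))·(∂w(z))ⁿ. -/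
lemma wirtingerD_congr {f g : ℂ → ℂ} {z : ℂ} (h : f =ᶠ[nhds z] g) :
    wirtingerD f z = wirtingerD g z := by
  unfold wirtingerD; rw [h.fderiv_eq]

lemma wirtingerD_mul {f g : ℂ → ℂ} {z : ℂ} (hf : DifferentiableAt ℝ f z)
    (hg : DifferentiableAt ℝ g z) :
    wirtingerD (fun ζ => f ζ * g ζ) z = wirtingerD f z * g z + f z * wirtingerD g z := by
  unfold wirtingerD
  rw [fderiv_fun_mul hf hg]
  simp only [ContinuousLinearMap.add_apply, ContinuousLinearMap.smul_apply, smul_eq_mul]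
  ring

lemma wirtingerDBar_mul {f g : ℂ → ℂ} {z : ℂ} (hf : DifferentiableAt ℝ f z)
    (hg : DifferentiableAt ℝ g z) :
    wirtingerDBar (fun ζ => f ζ * g ζ) z = wirtingerDBar f z * g z + f z * wirtingerDBar g z := by
  unfold wirtingerDBar
  rw [fderiv_fun_mul hf hg]
  simp only [ContinuousLinearMap.add_apply, ContinuousLinearMap.smul_apply, smul_eq_mul]
  ring

lemma wirtingerD_neg {f : ℂ → ℂ} {z : ℂ} :
    wirtingerD (fun ζ => -f ζ) z = -wirtingerD f z := by
  unfold wirtingerD; rw [fderiv_fun_neg]; simp; ring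

lemma diff_wirtingerD {w : ℂ → ℂ} {U : Set ℂ} (hU : IsOpen U) (hw : ContDiffOn ℝ 2 w U)
    {z : ℂ} (hz : z ∈ U) : DifferentiableAt ℝ (wirtingerD w) z := by
  have hwz : ContDiffAt ℝ 2 w z := hw.contDiffAt (hU.mem_nhds hz)
  have hF : ContDiffAt ℝ 1 (fderiv ℝ w) z := hwz.fderiv_right (by norm_num)
  have hFd : DifferentiableAt ℝ (fderiv ℝ w) z := hF.differentiableAt one_ne_zero
  have hA : DifferentiableAt ℝ (fun ζ => fderiv ℝ w ζ 1) z :=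
    hFd.clm_apply (differentiableAt_const _)
  have hB : DifferentiableAt ℝ (fun ζ => fderiv ℝ w ζ Complex.I) z :=
    hFd.clm_apply (differentiableAt_const _)
  exact ((hA.sub (hB.const_mul Complex.I)).const_mul _)

lemma wirtingerDBar_wirtingerD_comm {w : ℂ → ℂ} {U : Set ℂ} (hU : IsOpen U)
    (hw : ContDiffOn ℝ 2 w U) {z : ℂ} (hz : z ∈ U) :
    wirtingerDBar (wirtingerD w) z = wirtingerD (wirtingerDBar w) z := by
  have hwz : ContDiffAt ℝ 2 w z := hw.contDiffAt (hU.mem_nhds hz)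
  have hF : ContDiffAt ℝ 1 (fderiv ℝ w) z := hwz.fderiv_right (by norm_num)
  have hFd : DifferentiableAt ℝ (fderiv ℝ w) z := hF.differentiableAt one_ne_zero
  set f'' := fderiv ℝ (fderiv ℝ w) z with hf''
  have hev : ∀ᶠ y in nhds z, HasFDerivAt w (fderiv ℝ w y) y := by
    filter_upwards [hU.mem_nhds hz] with y hy
    exact ((hw.contDiffAt (hU.mem_nhds hy)).differentiableAt (by norm_num)).hasFDerivAt
  have hsymm : ∀ v u : ℂ, f'' v u = f'' u v := fun v u =>
    second_derivative_symmetric_of_eventually hev hFd.hasFDerivAt v u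
  have happ : ∀ v : ℂ, fderiv ℝ (fun ζ => fderiv ℝ w ζ v) z = f''.flip v := by
    intro v
    rw [fderiv_clm_apply hFd (differentiableAt_const v)]
    simp
    rfl
  have hA : DifferentiableAt ℝ (fun ζ => fderiv ℝ w ζ 1) z :=
    hFd.clm_apply (differentiableAt_const _)
  have hB : DifferentiableAt ℝ (fun ζ => fderiv ℝ w ζ Complex.I) z :=
    hFd.clm_apply (differentiableAt_const _)
  have hD : ∀ u : ℂ, fderiv ℝ (wirtingerD w) z u
      = (1/2) * (f'' u 1 - Complex.I * f'' u Complex.I) := by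
    intro u
    have : fderiv ℝ (wirtingerD w) z =
        fderiv ℝ (fun ζ => (1/2 : ℂ) * ((fun ζ => fderiv ℝ w ζ 1) ζ
          - Complex.I * (fun ζ => fderiv ℝ w ζ Complex.I) ζ)) z := rfl
    rw [this, fderiv_const_mul (hA.fun_sub (hB.const_mul Complex.I)),
      fderiv_fun_sub hA (hB.const_mul Complex.I), fderiv_const_mul hB, happ, happ]
    simp [smul_eq_mul]
  have hDb : ∀ u : ℂ, fderiv ℝ (wirtingerDBar w) z u
      = (1/2) * (f'' u 1 + Complex.I * f'' u Complex.I) := by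
    intro u
    have : fderiv ℝ (wirtingerDBar w) z =
        fderiv ℝ (fun ζ => (1/2 : ℂ) * ((fun ζ => fderiv ℝ w ζ 1) ζ
          + Complex.I * (fun ζ => fderiv ℝ w ζ Complex.I) ζ)) z := rfl
    rw [this, fderiv_const_mul (hA.fun_add (hB.const_mul Complex.I)),
      fderiv_fun_add hA (hB.const_mul Complex.I), fderiv_const_mul hB, happ, happ]
    simp [smul_eq_mul]
    ring
  have e1 : wirtingerDBar (wirtingerD w) z = (1/2) * (fderiv ℝ (wirtingerD w) z 1
      + Complex.I * fderiv ℝ (wirtingerD w) z Complex.I) := rfl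
  have e2 : wirtingerD (wirtingerDBar w) z = (1/2) * (fderiv ℝ (wirtingerDBar w) z 1
      - Complex.I * fderiv ℝ (wirtingerDBar w) z Complex.I) := rfl
  rw [e1, e2, hD 1, hD Complex.I, hDb 1, hDb Complex.I, hsymm 1 Complex.I]
  ring

/-- The core Maaß-derivative computation of Section 5.1: if `w` is a holomorphic
coordinate for the Beltrami coefficient `μ` on the open set `U` (i.e. `∂̄w = −μ·∂w`
on `U`), then for every `n` and `z ∈ U`,
`(∂̄ + μ·∂)(φ·(∂w)ⁿ)(z) = (∂̄φ(z) + μ(z)·∂φ(z) − n·φ(z)·∂μ(z))·(∂w(z))ⁿ`. -/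
theorem maass_dbar_computation (U : Set ℂ) (hU : IsOpen U) (w φ μ : ℂ → ℂ)
    (hw : ContDiffOn ℝ 2 w U)
    (hφ : DifferentiableOn ℝ φ U) (hμ : DifferentiableOn ℝ μ U)
    (hiso : ∀ z ∈ U, wirtingerDBar w z = -μ z * wirtingerD w z) :
    ∀ (n : ℕ), ∀ z ∈ U,
      wirtingerDBar (fun ζ => φ ζ * (wirtingerD w ζ) ^ n) z +
          μ z * wirtingerD (fun ζ => φ ζ * (wirtingerD w ζ) ^ n) z =
        (wirtingerDBar φ z + μ z * wirtingerD φ z - (n : ℂ) * φ z * wirtingerD μ z) *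
          (wirtingerD w z) ^ n := by
  have hφ' : ∀ z ∈ U, DifferentiableAt ℝ φ z := fun z hz =>
    (hφ z hz).differentiableAt (hU.mem_nhds hz)
  have hμ' : ∀ z ∈ U, DifferentiableAt ℝ μ z := fun z hz =>
    (hμ z hz).differentiableAt (hU.mem_nhds hz)
  have hDw : ∀ z ∈ U, DifferentiableAt ℝ (wirtingerD w) z := fun z hz =>
    diff_wirtingerD hU hw hz
  have keyB : ∀ z ∈ U, wirtingerDBar (wirtingerD w) z + μ z * wirtingerD (wirtingerD w) z
      = -(wirtingerD μ z) * wirtingerD w z := by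
    intro z hz
    have hcong : wirtingerDBar w =ᶠ[nhds z] (fun ζ => (-μ ζ) * wirtingerD w ζ) := by
      filter_upwards [hU.mem_nhds hz] with y hy using hiso y hy
    have h1 : wirtingerD (wirtingerDBar w) z
        = wirtingerD (fun ζ => (-μ ζ) * wirtingerD w ζ) z := wirtingerD_congr hcong
    have h2 := wirtingerD_mul (f := fun ζ => -μ ζ) (g := wirtingerD w)
      ((hμ' z hz).neg) (hDw z hz)
    have h3 : wirtingerD (fun ζ => -μ ζ) z = -wirtingerD μ z := wirtingerD_neg
    rw [wirtingerDBar_wirtingerD_comm hU hw hz, h1, h2, h3]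
    ring
  intro n
  induction n with
  | zero =>
    intro z hz
    simp
  | succ n ih =>
    intro z hz
    have hfn : DifferentiableAt ℝ (fun ζ => φ ζ * (wirtingerD w ζ) ^ n) z :=
      (hφ' z hz).mul ((hDw z hz).pow n)
    have e : (fun ζ => φ ζ * (wirtingerD w ζ) ^ (n + 1))
        = (fun ζ => (φ ζ * (wirtingerD w ζ) ^ n) * wirtingerD w ζ) := by
      funext ζ; ring
    have hmulD := wirtingerD_mul (f := fun ζ => φ ζ * (wirtingerD w ζ) ^ n)
      (g := wirtingerD w) hfn (hDw z hz)
    have hmulDb := wirtingerDBar_mul (f := fun ζ => φ ζ * (wirtingerD w ζ) ^ n)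
      (g := wirtingerD w) hfn (hDw z hz)
    rw [e, hmulD, hmulDb]
    have hb := keyB z hz
    have hi := ih z hz
    push_cast
    linear_combination (wirtingerD w z) * hi + (φ z * (wirtingerD w z) ^ n) * hb
end

section
/- Let R be a commutative ring, let k ≥ 2 be a natural number, and let p, q ∈ R[X] be polynomials with p.coeff 0 = 0, p.coeff 1 = 1, q.coeff 0 = 0, q.coeff 1 = 1, and p.coeff i = 0 and q.coeff i = 0 for all i with 2 ≤ i < k. Then (p.comp q).coeff 0 = 0, (p.comp q).coeff 1 = 1, and for every i with 2 ≤ i ≤ 2k − 2 one has (p.comp q).coeff i = p.coeff i + q.coeff i. -/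
open Polynomial Finset

lemma jet_pow_coeff {R : Type*} [CommRing R] {k : ℕ} (hk : 2 ≤ k)
    {q : Polynomial R} (hq0 : q.coeff 0 = 0) (hq1 : q.coeff 1 = 1)
    (hq : ∀ i, 2 ≤ i → i < k → q.coeff i = 0) :
    ∀ n i, i < n + (k - 1) → (q ^ n).coeff i = if i = n then 1 else 0 := by
  intro n
  induction n with
  | zero => intro i _; simp [Polynomial.coeff_one]
  | succ n ih =>
    intro i hi
    rcases Nat.eq_zero_or_pos i with rfl | hi1
    · rw [pow_succ, Polynomial.mul_coeff_zero, hq0, mul_zero]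
      simp
    rw [pow_succ, Polynomial.coeff_mul]
    rw [Finset.sum_eq_single (i - 1, 1)]
    · rw [hq1, mul_one, ih (i - 1) (by omega)]
      have : i - 1 = n ↔ i = n + 1 := by omega
      simp [this]
    · rintro ⟨a, b⟩ hab hne
      rw [Finset.HasAntidiagonal.mem_antidiagonal] at hab
      simp only at hab ⊢
      rcases Nat.lt_or_ge b 2 with hb | hb
      · interval_cases b
        · rw [hq0, mul_zero]
        · exfalso; apply hne; simp; omega
      rcases Nat.lt_or_ge b k with hbk | hbk
      · rw [hq b hb hbk, mul_zero]
      · have ha : a < n := by omega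
        rw [ih a (by omega), if_neg (by omega), zero_mul]
    · intro h
      exfalso
      exact h (by rw [Finset.HasAntidiagonal.mem_antidiagonal]; simp; omega)

lemma jet_comp_coeff_aux {R : Type*} [CommRing R] {k : ℕ} (hk : 2 ≤ k)
    {f q : Polynomial R} (hq0 : q.coeff 0 = 0) (hq1 : q.coeff 1 = 1)
    (hq : ∀ i, 2 ≤ i → i < k → q.coeff i = 0)
    (hf : ∀ j, j < k → f.coeff j = 0) :
    ∀ i, i ≤ 2 * k - 2 → (f.comp q).coeff i = f.coeff i := by
  intro i hi
  rw [Polynomial.comp_eq_sum_left, Polynomial.sum, Polynomial.finset_sum_coeff]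
  simp only [Polynomial.coeff_C_mul]
  rw [Finset.sum_eq_single i]
  · by_cases h : f.coeff i = 0
    · rw [h, zero_mul]
    · have hik : k ≤ i := by
        by_contra hc; exact h (hf i (by omega))
      rw [jet_pow_coeff hk hq0 hq1 hq i i (by omega), if_pos rfl, mul_one]
  · intro n hn hne
    have hnk : k ≤ n := by
      by_contra hc
      exact (Polynomial.mem_support_iff.mp hn) (hf n (by omega))
    rw [jet_pow_coeff hk hq0 hq1 hq n i (by omega), if_neg (Ne.symm hne), mul_zero]
  · intro h
    rw [Polynomial.notMem_support_iff.mp h, zero_mul]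

/-- Model jet group: for polynomials `p, q` of the form `X + (terms of degree ≥ k)`
with `k ≥ 2`, composition fixes the coefficients in degrees `0` and `1` and is
addition on the coefficients in degrees `2 ≤ i ≤ 2k − 2`. -/
theorem jet_group_comp_coeff (R : Type*) [CommRing R] (k : ℕ) (hk : 2 ≤ k)
    (p q : Polynomial R)
    (hp0 : p.coeff 0 = 0) (hp1 : p.coeff 1 = 1)
    (hq0 : q.coeff 0 = 0) (hq1 : q.coeff 1 = 1)
    (hp : ∀ i, 2 ≤ i → i < k → p.coeff i = 0)
    (hq : ∀ i, 2 ≤ i → i < k → q.coeff i = 0) :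
    (p.comp q).coeff 0 = 0 ∧ (p.comp q).coeff 1 = 1 ∧
      ∀ i, 2 ≤ i → i ≤ 2 * k - 2 → (p.comp q).coeff i = p.coeff i + q.coeff i := by
  set f := p - X with hf
  have hpf : p = X + f := by ring
  have hfc : ∀ j, j < k → f.coeff j = 0 := by
    intro j hj
    rcases Nat.lt_or_ge j 2 with hj2 | hj2
    · interval_cases j <;> simp [hf, hp0, hp1]
    · simp only [hf, Polynomial.coeff_sub, hp j hj2 hj, Polynomial.coeff_X, if_neg (by omega : ¬ 1 = j)]; ring
  have key : ∀ i, i ≤ 2 * k - 2 → (p.comp q).coeff i = q.coeff i + f.coeff i := by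
    intro i hi
    rw [hpf, Polynomial.add_comp, Polynomial.X_comp, Polynomial.coeff_add,
      jet_comp_coeff_aux hk hq0 hq1 hq hfc i hi]
  refine ⟨?_, ?_, ?_⟩
  · rw [key 0 (by omega), hq0, hfc 0 (by omega), add_zero]
  · rw [key 1 (by omega), hq1, hfc 1 (by omega), add_zero]
  · intro i h2 hi
    rw [key i hi, hf]
    have : (X : Polynomial R).coeff i = 0 := by
      rw [Polynomial.coeff_X, if_neg (by omega : ¬ 1 = i)]
    rw [Polynomial.coeff_sub, this, sub_zero]
    ring
end

section
/- Let R be a commutative ring, let k ≥ 2 be a natural number, and let p, q ∈ R[X] with p.coeff 0 = 0, p.coeff 1 = 1, q.coeff 0 = 0, q.coeff 1 = 1, and q.coeff i = 0 for all i with 2 ≤ i < k. Then for every i ≤ k one has (p.comp q).coeff i = (q.comp p).coeff i; equivalently, all coefficients of p.comp q − q.comp p in degrees ≤ k vanish. -/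
open Polynomial

private lemma pow_coeff_of {R : Type*} [CommRing R] (h : Polynomial R)
    (h0 : h.coeff 0 = 0) (h1 : h.coeff 1 = 1) (j i : ℕ) (hij : i ≤ j) :
    (h ^ j).coeff i = if i = j then 1 else 0 := by
  have hX : h = X * h.divX := by
    conv_lhs => rw [← X_mul_divX_add h, h0, map_zero, add_zero]
  rw [hX, mul_pow, coeff_X_pow_mul']
  rcases eq_or_lt_of_le hij with rfl | hlt
  · simp only [le_refl, if_true, Nat.sub_self, if_pos rfl]
    rw [coeff_zero_eq_eval_zero, eval_pow, ← coeff_zero_eq_eval_zero, coeff_divX, h1, one_pow]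
  · rw [if_neg (by omega), if_neg (by omega)]

/-- Model for `[N, N^k] ⊆ N^{k+1}`: if `p = X + (higher order)` and
`q = X + (terms of degree ≥ k)` with `k ≥ 2`, then `p ∘ q` and `q ∘ p` agree in all
degrees `≤ k`; equivalently all coefficients of `p.comp q − q.comp p` in degrees
`≤ k` vanish. -/
theorem jet_group_comm_coeff (R : Type*) [CommRing R] (k : ℕ) (hk : 2 ≤ k)
    (p q : Polynomial R)
    (hp0 : p.coeff 0 = 0) (hp1 : p.coeff 1 = 1)
    (hq0 : q.coeff 0 = 0) (hq1 : q.coeff 1 = 1)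
    (hq : ∀ i, 2 ≤ i → i < k → q.coeff i = 0) :
    ∀ i ≤ k, (p.comp q).coeff i = (q.comp p).coeff i := by
  -- coefficients of q^j for j ≥ 2
  have qpow : ∀ j, 2 ≤ j → ∀ i ≤ k, (q ^ j).coeff i = if i = j then 1 else 0 := by
    intro j hj
    induction j with
    | zero => omega
    | succ j ih =>
      rcases Nat.lt_or_ge j 2 with hj2 | hj2
      · -- j = 1, so q^2
        interval_cases j
        · omega
        · intro i hi
          by_cases h2 : i = 2
          · subst h2
            rw [pow_succ, pow_one, coeff_mul, Finset.sum_eq_single (1, 1)]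
            · simp [hq1]
            · rintro ⟨a, b⟩ hab hne
              simp only [Finset.HasAntidiagonal.mem_antidiagonal] at hab
              have ha2 : a ≤ 2 := by omega
              interval_cases a
              · simp [hq0]
              · exfalso; apply hne; simp [Prod.ext_iff]; omega
              · have : b = 0 := by omega
                simp [this, hq0]
            · intro h; exact absurd (by simp [Finset.mem_antidiagonal]) h
          · rw [pow_succ, pow_one, coeff_mul, Finset.sum_eq_zero, if_neg (by omega)]
            rintro ⟨a, b⟩ hab
            simp only [Finset.HasAntidiagonal.mem_antidiagonal] at hab
            rcases Nat.eq_zero_or_pos a with rfl | ha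
            · simp [hq0]
            rcases Nat.eq_zero_or_pos b with rfl | hb
            · simp [hq0]
            by_cases ha1 : a = 1
            · have hb1 : b ≠ 1 := by omega
              rw [hq b (by omega) (by omega), mul_zero]
            · rw [hq a (by omega) (by omega), zero_mul]
      · intro i hi
        by_cases hij : j ≤ i
        · rw [pow_succ, coeff_mul, Finset.sum_eq_single (j, i - j)]
          · rw [ih hj2 j (by omega), if_pos rfl, one_mul]
            by_cases hij1 : i = j + 1
            · rw [if_pos hij1, show i - j = 1 by omega, hq1]
            · rw [if_neg hij1]
              rcases Nat.eq_or_lt_of_le hij with rfl | hlt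
              · rw [Nat.sub_self, hq0]
              · exact hq _ (by omega) (by omega)
          · rintro ⟨a, b⟩ hab hne
            simp only [Finset.HasAntidiagonal.mem_antidiagonal] at hab
            rw [ih hj2 a (by omega)]
            by_cases haj : a = j
            · exfalso; apply hne; simp [Prod.ext_iff]; omega
            · rw [if_neg haj, zero_mul]
          · intro h
            exact absurd (by simp only [Finset.HasAntidiagonal.mem_antidiagonal]; omega) h
        · rw [pow_succ, coeff_mul, Finset.sum_eq_zero, if_neg (by omega)]
          rintro ⟨a, b⟩ hab
          simp only [Finset.HasAntidiagonal.mem_antidiagonal] at hab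
          rw [ih hj2 a (by omega), if_neg (by omega), zero_mul]
  -- set t = p - X, s = q - X
  set t : Polynomial R := p - X with ht
  set s : Polynomial R := q - X with hs
  have ht0 : t.coeff 0 = 0 := by simp [ht, hp0]
  have ht1 : t.coeff 1 = 0 := by simp [ht, hp1]
  have hsl : ∀ i, i < k → s.coeff i = 0 := by
    intro i hik
    rcases Nat.lt_or_ge i 2 with h2 | h2
    · interval_cases i <;> simp [hs, hq0, hq1]
    · simp [hs, coeff_X, hq i h2 hik]
      omega
  -- (t.comp q).coeff i = t.coeff i for i ≤ k
  have htq : ∀ i ≤ k, (t.comp q).coeff i = t.coeff i := by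
    intro i hi
    rw [comp_eq_sum_left, Polynomial.sum, finset_sum_coeff]
    simp only [coeff_C_mul]
    rw [Finset.sum_eq_single i]
    · by_cases hmem : i ∈ t.support
      · have h2 : 2 ≤ i := by
          rcases Nat.lt_or_ge i 2 with h | h
          · exfalso; rw [mem_support_iff] at hmem; interval_cases i <;> simp_all
          · exact h
        rw [qpow i h2 i hi, if_pos rfl, mul_one]
      · rw [notMem_support_iff.mp hmem, zero_mul]
    · intro j hjmem hji
      have h2 : 2 ≤ j := by
        rcases Nat.lt_or_ge j 2 with h | h
        · exfalso; rw [mem_support_iff] at hjmem; interval_cases j <;> simp_all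
        · exact h
      rw [qpow j h2 i hi, if_neg (fun h => hji h.symm), mul_zero]
    · intro hmem
      rw [notMem_support_iff.mp hmem, zero_mul]
  -- (s.comp p).coeff i = s.coeff i for i ≤ k
  have hsp : ∀ i ≤ k, (s.comp p).coeff i = s.coeff i := by
    intro i hi
    rw [comp_eq_sum_left, Polynomial.sum, finset_sum_coeff]
    simp only [coeff_C_mul]
    rw [Finset.sum_eq_single i]
    · by_cases hmem : i ∈ s.support
      · have hik : k ≤ i := by
          by_contra h; push_neg at h
          exact (mem_support_iff.mp hmem) (hsl i h)
        rw [pow_coeff_of p hp0 hp1 i i le_rfl, if_pos rfl, mul_one]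
      · rw [notMem_support_iff.mp hmem, zero_mul]
    · intro j hjmem hji
      have hjk : k ≤ j := by
        by_contra h; push_neg at h
        exact (mem_support_iff.mp hjmem) (hsl j h)
      rw [pow_coeff_of p hp0 hp1 j i (le_trans hi hjk),
        if_neg (fun h => hji h.symm), mul_zero]
    · intro hmem
      rw [notMem_support_iff.mp hmem, zero_mul]
  intro i hi
  have hpq : p.comp q = q + t.comp q := by
    rw [ht, sub_comp, X_comp]; ring
  have hqp : q.comp p = p + s.comp p := by
    rw [hs, sub_comp, X_comp]; ring
  rw [hpq, hqp, coeff_add, coeff_add, htq i hi, hsp i hi]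
  have : t.coeff i + s.coeff i = s.coeff i + t.coeff i := add_comm _ _
  rw [ht, hs]
  simp only [coeff_sub]
  ring
end
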